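/- Let ρ₀ be a positive semidefinite matrix on ℂ^D with support projector P and L = Σ_x √λ_x (|x⟩⟨x|)ᵀ + c(I−P)ᵀ built from its spectral decomposition ρ₀ = Σ_x λ_x|x⟩⟨x| (λ_x > 0, c ≠ 0). Let 0 < ε < 1 and let ρ_V be a positive semidefinite matrix with (1−ε)ρ₀ ≤ ρ_V ≤ (1+ε)ρ₀ (Loewner order), where ρ_V = Σ_{φ∈W} p_φ M_φ is a convex combination of positive semidefinite matrices M_φ with weights p_φ summing to 1. Define p_res = ε/(1+ε) and τ_res = ((1+ε)/ε)Pᵀ − (1/ε)(L^{-1})† ρ_Vᵀ L^{-1}. Then: (i) τ_res ≥ 0; (ii) 0 ≤ p_res τ_res ≤ (2ε/(1+ε)) Pᵀ; and (iii) Σ_{φ∈W} (1−p_res) p_φ (L^{-1})† M_φᵀ L^{-1} + p_res τ_res = Pᵀ, so that these operators form a positive operator-valued measure on the range of Pᵀ. -/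

import Mathlib

open Matrix MeasureTheory
open scoped Kronecker ComplexOrder

noncomputable section

/-- The positive semidefinite square root of a matrix (junk value `0` if not PSD). -/
def matSqrt {ι : Type*} [Fintype ι] [DecidableEq ι] (A : Matrix ι ι ℂ) : Matrix ι ι ℂ :=
  open Classical in if h : A.PosSemidef then
    (h.1.eigenvectorUnitary : Matrix ι ι ℂ) * diagonal (((↑) : ℝ → ℂ) ∘ (√·) ∘ h.1.eigenvalues) *
      (star h.1.eigenvectorUnitary : Matrix ι ι ℂ) else 0

/-- The matrix absolute value `|X| = √(XᴴX)`. -/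
def matAbs {ι : Type*} [Fintype ι] [DecidableEq ι] (X : Matrix ι ι ℂ) : Matrix ι ι ℂ :=
  matSqrt (Xᴴ * X)

/-- Uhlmann fidelity `F(ρ,σ) = (Tr|√ρ√σ|)²`. -/
def fid {ι : Type*} [Fintype ι] [DecidableEq ι] (ρ σ : Matrix ι ι ℂ) : ℝ :=
  ((matAbs (matSqrt ρ * matSqrt σ)).trace).re ^ 2

/-- A density matrix: positive semidefinite with unit trace. -/
def IsDensity {ι : Type*} [Fintype ι] [DecidableEq ι] (ρ : Matrix ι ι ℂ) : Prop :=
  ρ.PosSemidef ∧ ρ.trace = 1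

/-- The rank-one projector `|ψ⟩⟨ψ|`. -/
def ketbra {ι : Type*} (ψ : ι → ℂ) : Matrix ι ι ℂ := Matrix.vecMulVec ψ (star ψ)

/-- The `l`-fold tensor power of a matrix on `ℂ^d`, acting on `(ℂ^d)^{⊗l}`. -/
def tpow {d : ℕ} (M : Matrix (Fin d) (Fin d) ℂ) (l : ℕ) :
    Matrix (Fin l → Fin d) (Fin l → Fin d) ℂ :=
  Matrix.of fun f g => ∏ i, M (f i) (g i)

/-- Loewner order: `A ⪯ B` iff `B - A` is positive semidefinite. -/
def loewnerLE {ι : Type*} [Fintype ι] (A B : Matrix ι ι ℂ) : Prop := (B - A).PosSemidef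

/-- Projector onto the symmetric subspace of `(ℂ^d)^{⊗l}`:
`(1/l!) Σ_{π ∈ S_l} U_π` where `U_π` permutes the tensor factors. -/
def symProj (d l : ℕ) : Matrix (Fin l → Fin d) (Fin l → Fin d) ℂ :=
  (l.factorial : ℂ)⁻¹ •
    ∑ π : Equiv.Perm (Fin l), Matrix.of fun f g => if f = (fun i => g (π i)) then (1 : ℂ) else 0


/-- Partial trace over the second tensor factor. -/
def ptraceB {D : ℕ} (M : Matrix (Fin D × Fin D) (Fin D × Fin D) ℂ) :
    Matrix (Fin D) (Fin D) ℂ :=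
  Matrix.of fun i j => ∑ k, M (i, k) (j, k)

/-- The maximally entangled vector `(1/√D) Σᵢ |i⟩⊗|i⟩` on `ℂ^D ⊗ ℂ^D`. -/
def maxEnt (D : ℕ) : Fin D × Fin D → ℂ :=
  fun q => if q.1 = q.2 then ((Real.sqrt D : ℝ) : ℂ)⁻¹ else 0


section helpers
variable {n : Type*} [Fintype n] [DecidableEq n]

omit [DecidableEq n] in
lemma smul_psd {A : Matrix n n ℂ} (hA : A.PosSemidef) {r : ℝ} (hr : 0 ≤ r) :
    ((r : ℂ) • A).PosSemidef := by
  refine .of_dotProduct_mulVec_nonneg ?_ ?_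
  · unfold Matrix.IsHermitian
    rw [conjTranspose_smul, hA.1.eq]
    norm_num
  · intro x
    rw [Matrix.smul_mulVec, dotProduct_smul]
    exact mul_nonneg (by exact_mod_cast hr) (hA.dotProduct_mulVec_nonneg x)

omit [Fintype n] [DecidableEq n] in
lemma ketbra_herm (ψ : n → ℂ) : (ketbra ψ)ᴴ = ketbra ψ := by
  ext i j
  simp [ketbra, vecMulVec, mul_comm]

omit [DecidableEq n] in
lemma kmul {κ : Type*} [DecidableEq κ] (x : κ → (n → ℂ))
    (hx : ∀ a b, star (x a) ⬝ᵥ x b = (if a = b then (1 : ℂ) else 0)) (a b : κ) :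
    ketbra (x a) * ketbra (x b) = if a = b then ketbra (x a) else 0 := by
  have h := hx a b
  simp only [dotProduct, Pi.star_apply] at h
  ext i j
  rw [Matrix.mul_apply]
  simp only [ketbra, vecMulVec_apply, Pi.star_apply]
  calc ∑ k, x a i * star (x a k) * (x b k * star (x b j))
      = (x a i * star (x b j)) * ∑ k, star (x a k) * x b k := by
        rw [Finset.mul_sum]; congr 1; ext k; ring
    _ = _ := by
        rw [h]; split
        · subst ‹a = b›; simp [vecMulVec_apply]
        · simp

omit [DecidableEq n] in
lemma Smul {κ : Type*} [Fintype κ] [DecidableEq κ] (x : κ → (n → ℂ))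
    (hx : ∀ a b, star (x a) ⬝ᵥ x b = (if a = b then (1 : ℂ) else 0)) (r s : κ → ℂ) :
    (∑ a, r a • ketbra (x a)) * (∑ a, s a • ketbra (x a)) =
      ∑ a, (r a * s a) • ketbra (x a) := by
  rw [Finset.sum_mul]
  refine Finset.sum_congr rfl fun a _ => ?_
  · rw [Finset.mul_sum]
    rw [Finset.sum_congr rfl (fun b _ => by
      rw [Matrix.smul_mul, Matrix.mul_smul, kmul x hx a b, smul_ite, smul_ite, smul_zero,
        smul_zero])]

    simp [Finset.sum_ite_eq, smul_smul]

omit [Fintype n] [DecidableEq n] in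
lemma Sherm {κ : Type*} [Fintype κ] (x : κ → (n → ℂ)) (r : κ → ℂ) :
    (∑ a, r a • ketbra (x a))ᴴ = ∑ a, star (r a) • ketbra (x a) := by
  rw [conjTranspose_sum]
  exact Finset.sum_congr rfl fun a _ => by rw [conjTranspose_smul, ketbra_herm]

omit [Fintype n] [DecidableEq n] in
lemma tct (A : Matrix n n ℂ) : (Aᵀ)ᴴ = (Aᴴ)ᵀ := by
  ext i j; simp

end helpers


/-- the residual operator `τ_res` completes Bob's approximate
measurement to a POVM on the range of `Pᵀ`. -/
theorem remote_preparation_approximate_povm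
    (D : ℕ) (hD : 1 ≤ D)
    (κ : Type*) [Fintype κ] [DecidableEq κ]
    (x : κ → (Fin D → ℂ)) (hx : ∀ a b, star (x a) ⬝ᵥ x b = (if a = b then (1 : ℂ) else 0))
    (lam : κ → ℝ) (hlam : ∀ a, 0 < lam a)
    (ρ₀ : Matrix (Fin D) (Fin D) ℂ) (hρ₀ : ρ₀ = ∑ a, (lam a : ℂ) • ketbra (x a))
    (P : Matrix (Fin D) (Fin D) ℂ) (hP : P = ∑ a, ketbra (x a))
    (c : ℂ) (hc : c ≠ 0)
    (L : Matrix (Fin D) (Fin D) ℂ)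
    (hL : L = (∑ a, ((Real.sqrt (lam a) : ℝ) : ℂ) • (ketbra (x a))ᵀ) + c • (1 - P)ᵀ)
    (ε : ℝ) (hε0 : 0 < ε) (hε1 : ε < 1)
    -- ρ_V = Σ_φ p_φ M_φ is a convex combination of PSD matrices
    (Φ : Type*) [Fintype Φ]
    (M : Φ → Matrix (Fin D) (Fin D) ℂ) (hM : ∀ φ, (M φ).PosSemidef)
    (p : Φ → ℝ) (hp : ∀ φ, 0 ≤ p φ) (hpsum : ∑ φ, p φ = 1)
    (ρV : Matrix (Fin D) (Fin D) ℂ) (hρV : ρV = ∑ φ, (p φ : ℂ) • M φ)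
    (hρVpsd : ρV.PosSemidef)
    -- Loewner sandwich (1−ε)ρ₀ ≤ ρ_V ≤ (1+ε)ρ₀
    (hlo : loewnerLE (((1 - ε : ℝ) : ℂ) • ρ₀) ρV)
    (hhi : loewnerLE ρV (((1 + ε : ℝ) : ℂ) • ρ₀))
    -- τ_res = ((1+ε)/ε)Pᵀ − (1/ε)(L⁻¹)† ρ_Vᵀ L⁻¹
    (τres : Matrix (Fin D) (Fin D) ℂ)
    (hτ : τres = (((1 + ε) / ε : ℝ) : ℂ) • Pᵀ -
      ((ε⁻¹ : ℝ) : ℂ) • ((L⁻¹)ᴴ * ρVᵀ * L⁻¹)) :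
    τres.PosSemidef ∧
    (loewnerLE 0 (((ε / (1 + ε) : ℝ) : ℂ) • τres) ∧
      loewnerLE (((ε / (1 + ε) : ℝ) : ℂ) • τres) (((2 * ε / (1 + ε) : ℝ) : ℂ) • Pᵀ)) ∧
    (∑ φ, (((1 - ε / (1 + ε)) * p φ : ℝ) : ℂ) • ((L⁻¹)ᴴ * (M φ)ᵀ * L⁻¹)) +
      (((ε / (1 + ε) : ℝ) : ℂ) • τres) = Pᵀ := by
  have h1ε : (0:ℝ) < 1 + ε := by linarith
  set sq : κ → ℂ := fun a => ((Real.sqrt (lam a) : ℝ) : ℂ) with hsqdef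
  set isq : κ → ℂ := fun a => (((Real.sqrt (lam a))⁻¹ : ℝ) : ℂ) with hisqdef
  have hsqpos : ∀ a, 0 < Real.sqrt (lam a) := fun a => Real.sqrt_pos.mpr (hlam a)
  set K : Matrix (Fin D) (Fin D) ℂ := (∑ a, sq a • ketbra (x a)) + c • (1 - P) with hK
  set K' : Matrix (Fin D) (Fin D) ℂ := (∑ a, isq a • ketbra (x a)) + c⁻¹ • (1 - P) with hK'
  have hP1 : P = ∑ a, (1:ℂ) • ketbra (x a) := by rw [hP]; simp
  have hSP : ∀ r : κ → ℂ, (∑ a, r a • ketbra (x a)) * P = ∑ a, r a • ketbra (x a) := by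
    intro r; rw [hP1, Smul x hx]; simp
  have hPS : ∀ r : κ → ℂ, P * (∑ a, r a • ketbra (x a)) = ∑ a, r a • ketbra (x a) := by
    intro r
    conv_lhs => rw [hP1]
    rw [Smul x hx]; simp
  have hS1 : ∀ r : κ → ℂ, (∑ a, r a • ketbra (x a)) * (1 - P) = 0 := by
    intro r; rw [Matrix.mul_sub, Matrix.mul_one, hSP, sub_self]
  have h1S : ∀ r : κ → ℂ, (1 - P) * (∑ a, r a • ketbra (x a)) = 0 := by
    intro r; rw [Matrix.sub_mul, Matrix.one_mul, hPS, sub_self]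
  have hPP : P * P = P := by
    rw [hP1, Smul x hx]
    simp
  have h1P1P : (1 - P) * (1 - P) = (1 - P) := by
    rw [Matrix.sub_mul, Matrix.one_mul, Matrix.mul_sub, Matrix.mul_one, hPP]
    abel
  -- K * K' = 1 and K' * K = 1
  have hKK' : K * K' = 1 := by
    rw [hK, hK', Matrix.add_mul, Matrix.mul_add, Matrix.mul_add, Matrix.smul_mul,
      Matrix.smul_mul, Matrix.mul_smul, Matrix.mul_smul, Smul x hx, hS1, h1S, h1P1P,
      smul_zero, smul_zero, smul_smul, mul_inv_cancel₀ hc, one_smul]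
    have : (∑ a, (sq a * isq a) • ketbra (x a)) = P := by
      rw [hP1]
      refine Finset.sum_congr rfl fun a _ => ?_
      congr 1
      show sq a * isq a = 1
      rw [hsqdef, hisqdef]
      rw [← Complex.ofReal_mul, mul_inv_cancel₀ (hsqpos a).ne']
      norm_num
    rw [this]
    try abel
  have hK'K : K' * K = 1 := by
    rw [hK, hK', Matrix.add_mul, Matrix.mul_add, Matrix.mul_add, Matrix.smul_mul,
      Matrix.smul_mul, Matrix.mul_smul, Matrix.mul_smul, Smul x hx, hS1, h1S, h1P1P,
      smul_zero, smul_zero, smul_smul, inv_mul_cancel₀ hc, one_smul]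
    have : (∑ a, (isq a * sq a) • ketbra (x a)) = P := by
      rw [hP1]
      refine Finset.sum_congr rfl fun a _ => ?_
      congr 1
      show isq a * sq a = 1
      rw [hsqdef, hisqdef]
      rw [← Complex.ofReal_mul, inv_mul_cancel₀ (hsqpos a).ne']
      norm_num
    rw [this]
    try abel
  have hLK : L = Kᵀ := by
    rw [hL, hK, transpose_add, transpose_sum, transpose_smul]
    congr 1
  have hLinv : L⁻¹ = K'ᵀ := by
    apply Matrix.inv_eq_left_inv
    rw [hLK, ← transpose_mul, hKK', transpose_one]
  have hE : ∀ A : Matrix (Fin D) (Fin D) ℂ,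
      (L⁻¹)ᴴ * Aᵀ * L⁻¹ = (K' * A * K'ᴴ)ᵀ := by
    intro A
    rw [hLinv, tct, transpose_mul, transpose_mul, Matrix.mul_assoc]
  have hEpsd : ∀ A : Matrix (Fin D) (Fin D) ℂ, A.PosSemidef →
      ((L⁻¹)ᴴ * Aᵀ * L⁻¹).PosSemidef := by
    intro A hA
    rw [hE]
    exact (hA.mul_mul_conjTranspose_same K').transpose
  -- Pᴴ = P
  have hPH : Pᴴ = P := by
    rw [hP1, Sherm]; simp
  have hK'H : K'ᴴ = (∑ a, isq a • ketbra (x a)) + (star c⁻¹) • (1 - P) := by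
    rw [hK', conjTranspose_add, conjTranspose_smul, Sherm, conjTranspose_sub,
      conjTranspose_one, hPH]
    congr 1
    refine Finset.sum_congr rfl fun a _ => ?_
    congr 1
    rw [hisqdef]
    exact Complex.conj_ofReal _
  have hEρ₀ : (L⁻¹)ᴴ * ρ₀ᵀ * L⁻¹ = Pᵀ := by
    rw [hE]
    congr 1
    have step1 : ρ₀ * K'ᴴ = ∑ a, ((lam a : ℂ) * isq a) • ketbra (x a) := by
      rw [hK'H, hρ₀, Matrix.mul_add, Matrix.mul_smul, Smul x hx, hS1, smul_zero, add_zero]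
    rw [Matrix.mul_assoc, step1, hK', Matrix.add_mul, Matrix.smul_mul, h1S, smul_zero,
      add_zero, Smul x hx]
    rw [hP1]
    refine Finset.sum_congr rfl fun a _ => ?_
    show (isq a * ((lam a : ℂ) * isq a)) • ketbra (x a) = (1 : ℂ) • ketbra (x a)
    congr 1
    have hl : (lam a : ℂ) = ((Real.sqrt (lam a) : ℝ) : ℂ) * ((Real.sqrt (lam a) : ℝ) : ℂ) := by
      rw [← Complex.ofReal_mul, Real.mul_self_sqrt (hlam a).le]
    have hs : ((Real.sqrt (lam a) : ℝ) : ℂ) ≠ 0 := by exact_mod_cast (hsqpos a).ne'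
    rw [hisqdef, hl]
    push_cast
    field_simp
  have hA1 : (L⁻¹)ᴴ * ((((1 + ε : ℝ) : ℂ) • ρ₀ - ρV))ᵀ * L⁻¹
      = ((1 + ε : ℝ) : ℂ) • Pᵀ - (L⁻¹)ᴴ * ρVᵀ * L⁻¹ := by
    rw [transpose_sub, transpose_smul, Matrix.mul_sub, Matrix.sub_mul, Matrix.mul_smul,
      Matrix.smul_mul, hEρ₀]
  have hA2 : (L⁻¹)ᴴ * ((ρV - ((1 - ε : ℝ) : ℂ) • ρ₀))ᵀ * L⁻¹
      = (L⁻¹)ᴴ * ρVᵀ * L⁻¹ - ((1 - ε : ℝ) : ℂ) • Pᵀ := by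
    rw [transpose_sub, transpose_smul, Matrix.mul_sub, Matrix.sub_mul, Matrix.mul_smul,
      Matrix.smul_mul, hEρ₀]
  have hsum : ∑ φ, (p φ : ℂ) • ((L⁻¹)ᴴ * (M φ)ᵀ * L⁻¹) = (L⁻¹)ᴴ * ρVᵀ * L⁻¹ := by
    rw [hρV, transpose_sum, Matrix.mul_sum, Finset.sum_mul]
    refine Finset.sum_congr rfl fun φ _ => ?_
    rw [transpose_smul, Matrix.mul_smul, Matrix.smul_mul]
  have hεC : (ε : ℂ) ≠ 0 := by exact_mod_cast hε0.ne'
  have h1εC : ((1 + ε : ℝ) : ℂ) ≠ 0 := by exact_mod_cast h1ε.ne'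
  have key1 : τres = ((ε⁻¹ : ℝ) : ℂ) •
      ((L⁻¹)ᴴ * ((((1 + ε : ℝ) : ℂ) • ρ₀ - ρV))ᵀ * L⁻¹) := by
    rw [hA1, hτ]
    match_scalars <;> (push_cast; try field_simp; try ring)
  have hτpsd : τres.PosSemidef := by
    rw [key1]
    exact smul_psd (hEpsd _ hhi) (by positivity)
  refine ⟨hτpsd, ⟨?_, ?_⟩, ?_⟩
  · unfold loewnerLE
    rw [sub_zero]
    exact smul_psd hτpsd (by positivity)
  · unfold loewnerLE
    have key2 : ((2 * ε / (1 + ε) : ℝ) : ℂ) • Pᵀ - ((ε / (1 + ε) : ℝ) : ℂ) • τres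
        = (((1 + ε)⁻¹ : ℝ) : ℂ) •
          ((L⁻¹)ᴴ * ((ρV - ((1 - ε : ℝ) : ℂ) • ρ₀))ᵀ * L⁻¹) := by
      rw [hA2, hτ]
      match_scalars <;> (push_cast; try field_simp; try ring)
    rw [key2]
    exact smul_psd (hEpsd _ hlo) (by positivity)
  · have hcoef : ∀ φ : Φ, (((1 - ε / (1 + ε)) * p φ : ℝ) : ℂ)
        = (((1 + ε)⁻¹ : ℝ) : ℂ) * (p φ : ℂ) := by
      intro φ
      push_cast
      rw [div_eq_mul_inv]
      congr 1
      field_simp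
      ring
    have hsum2 : (∑ φ, (((1 - ε / (1 + ε)) * p φ : ℝ) : ℂ) • ((L⁻¹)ᴴ * (M φ)ᵀ * L⁻¹))
        = (((1 + ε)⁻¹ : ℝ) : ℂ) • ((L⁻¹)ᴴ * ρVᵀ * L⁻¹) := by
      rw [← hsum, Finset.smul_sum]
      refine Finset.sum_congr rfl fun φ _ => ?_
      rw [smul_smul, hcoef φ]
    rw [hsum2, hτ]
    match_scalars <;> (push_cast; try field_simp; try ring)
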